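/- Let $A$ be a discrete valuation ring with valuation $v$, $M$ a finite abelian $p$-group where $p$ is the residue characteristic, and $A = \bigoplus_{m \in M} A_0 e_m$ an $M$-grading of $A$ with $A_0$ the degree-zero part, each graded piece free of rank one over $A_0$ generated by $e_m$ ($e_0 = 1$), and structure constants $\alpha_{m,n}$ all non-zero-divisors. Assume $e_n \in A^\times$ only for $n = 0$. Then the valuations $v(e_m)$, $m \in M$, are pairwise distinct. -/

import Mathlib

/-- for a totally ramified `M`-graded DVR (`M` a finite abelian `p`-group,
`p` the residue characteristic, graded pieces `A₀ eₘ`, non-zero-divisor structure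
constants, and `eₙ` a unit only for `n = 0`), the valuations `v (eₘ)` are pairwise
distinct. -/
theorem stmt3 {A₀ A : Type*} [CommRing A₀] [CommRing A] [IsDomain A]
    [IsDiscreteValuationRing A] [Algebra A₀ A]
    {M : Type*} [AddCommGroup M] [Fintype M]
    {p k : ℕ} [Fact p.Prime] [CharP (IsLocalRing.ResidueField A) p]
    (hcard : Fintype.card M = p ^ k)
    (e : M → A) (α : M → M → A₀)
    (b : Module.Basis M A₀ A) (hb : ∀ m, b m = e m) (he0 : e 0 = 1)
    (hmul : ∀ m n, e m * e n = algebraMap A₀ A (α m n) * e (m + n))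
    (hreg : ∀ m n, α m n ∈ nonZeroDivisors A₀)
    (hN : ∀ n, IsUnit (e n) → n = 0) :
    Function.Injective fun m => IsDiscreteValuationRing.addVal A (e m) := by
  classical
  intro m n hmn
  simp only at hmn
  -- `e m` and `e n` are associated
  have hdvd1 : e m ∣ e n := (IsDiscreteValuationRing.addVal_le_iff_dvd).mp (le_of_eq hmn)
  have hdvd2 : e n ∣ e m := (IsDiscreteValuationRing.addVal_le_iff_dvd).mp (le_of_eq hmn.symm)
  obtain ⟨u, hu⟩ := associated_of_dvd_dvd hdvd2 hdvd1
  -- expand the unit in the basis and multiply by `e n`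
  set c : M → A₀ := fun j => b.repr (↑u : A) (j - n) * α (j - n) n with hc
  have expand : e m = ∑ j : M, c j • b j := by
    have h1 : (↑u : A) = ∑ kk : M, b.repr (↑u : A) kk • b kk := by
      conv_lhs => rw [← b.sum_repr (↑u : A)]
    calc e m = e n * ↑u := hu.symm
      _ = e n * ∑ kk : M, b.repr (↑u : A) kk • b kk := by rw [← h1]
      _ = ∑ kk : M, c (kk + n) • b (kk + n) := by
          rw [Finset.mul_sum]
          refine Finset.sum_congr rfl fun kk _ => ?_
          rw [hb, hb, hc]
          simp only [add_sub_cancel_right]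
          rw [Algebra.smul_def, Algebra.smul_def, map_mul]
          rw [show e n * (algebraMap A₀ A (b.repr (↑u : A) kk) * e kk)
              = algebraMap A₀ A (b.repr (↑u : A) kk) * (e kk * e n) by ring,
            hmul kk n]
          ring
      _ = ∑ j : M, c j • b j := Fintype.sum_equiv (Equiv.addRight n) _ _ (fun kk => rfl)
  -- compare coordinates
  have hcoord : ∀ t : M, c t = if m = t then 1 else 0 := by
    intro t
    have h := congrArg (fun x => (b.repr x) t) expand
    rw [← hb m] at h
    simp only [map_sum, map_smul, Module.Basis.repr_self, Finsupp.finset_sum_apply,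
      Finsupp.smul_apply, Finsupp.single_apply, smul_eq_mul, mul_ite, mul_one, mul_zero,
      Finset.sum_ite_eq', Finset.mem_univ, if_true] at h
    simpa [eq_comm] using h.symm
  -- the coordinate at `m - n` is a unit
  have hcm : b.repr (↑u : A) (m - n) * α (m - n) n = 1 := by
    have := hcoord m
    simpa [hc] using this
  -- all other coordinates vanish
  have hzero : ∀ kk : M, kk ≠ m - n → b.repr (↑u : A) kk = 0 := by
    intro kk hkk
    have hne : m ≠ kk + n := by
      intro h; exact hkk (by rw [h]; abel)
    have := hcoord (kk + n)
    rw [if_neg hne] at this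
    rw [hc] at this
    simp only [add_sub_cancel_right] at this
    exact (hreg kk n).2 _ this
  -- hence `u = (repr u (m-n)) • e (m - n)`
  have hu2 : (↑u : A) = algebraMap A₀ A (b.repr (↑u : A) (m - n)) * e (m - n) := by
    conv_lhs => rw [← b.sum_repr (↑u : A)]
    rw [Finset.sum_eq_single (m - n)]
    · rw [hb, Algebra.smul_def]
    · intro kk _ hkk
      rw [hzero kk hkk, zero_smul]
    · intro h; exact absurd (Finset.mem_univ _) h
  -- so `e (m - n)` is a unit
  have : IsUnit (e (m - n)) := by
    have hu' : IsUnit (↑u : A) := u.isUnit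
    rw [hu2] at hu'
    exact isUnit_of_mul_isUnit_right hu'
  have := hN _ this
  rwa [sub_eq_zero] at this
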